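/- Let A be a commutative ring that is a reduced finite-dimensional ℚ-algebra with dim_ℚ A ≤ n, and let R ≥ 0 be a real number. Then the set of elements a ∈ A that are roots of some monic polynomial f ∈ ℤ[X] of degree n all of whose roots in ℂ have absolute value at most R is finite. -/

import Mathlib

open Polynomial

/-- In a reduced finite-dimensional algebra over `ℚ` (hence artinian), the root set of
any monic integer polynomial is finite. -/
lemma finite_rootSet_of_monic (A : Type*) [CommRing A] [IsReduced A]
    [Algebra ℚ A] [FiniteDimensional ℚ A] (f : Polynomial ℤ) (hf : f.Monic) :
    {a : A | Polynomial.aeval a f = 0}.Finite := by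
  classical
  haveI : IsArtinianRing A := IsArtinianRing.of_finite ℚ A
  haveI : Finite (MaximalSpectrum A) := inferInstance
  let e := IsArtinianRing.equivPi A
  have hsub : {a : A | Polynomial.aeval a f = 0} ⊆
      e ⁻¹' (Set.univ.pi fun I : MaximalSpectrum A =>
        {x : A ⧸ I.1 | (f.map (Int.castRingHom _)).IsRoot x}) := by
    intro a ha I _
    have ha' : Polynomial.eval₂ (algebraMap ℤ A) a f = 0 := ha
    have h := congrArg ((Pi.evalRingHom _ I).comp e.toRingHom) ha'
    rw [Polynomial.hom_eval₂, map_zero] at h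
    have hcomp : ((Pi.evalRingHom (fun I : MaximalSpectrum A => A ⧸ I.1) I).comp
        e.toRingHom).comp (algebraMap ℤ A) = Int.castRingHom (A ⧸ I.1) := by
      ext x
      simp
    rw [hcomp] at h
    simpa [Polynomial.IsRoot, Polynomial.eval_map, hcomp] using h
  have hfin : (Set.univ.pi fun I : MaximalSpectrum A =>
      {x : A ⧸ I.1 | (f.map (Int.castRingHom _)).IsRoot x}).Finite := by
    refine Set.Finite.pi fun I => ?_
    haveI : I.1.IsMaximal := I.2
    haveI : I.1.IsPrime := Ideal.IsMaximal.isPrime ‹_›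
    exact Polynomial.finite_setOf_isRoot ((hf.map (Int.castRingHom (A ⧸ I.1))).ne_zero)
  exact (hfin.preimage e.injective.injOn).subset hsub

/-- In a reduced commutative `ℚ`-algebra of dimension at most `n`, the set of elements
satisfying some monic integer polynomial of degree `n` with all complex roots of absolute
value at most `R` is finite. -/
theorem fiber_finiteness (n : ℕ) (hn : 1 ≤ n) (A : Type*) [CommRing A] [IsReduced A]
    [Algebra ℚ A] [FiniteDimensional ℚ A] (hdim : Module.finrank ℚ A ≤ n)
    (R : ℝ) (hR : 0 ≤ R) :
    {a : A | ∃ f : Polynomial ℤ, f.Monic ∧ f.natDegree = n ∧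
      (∀ z : ℂ, Polynomial.aeval z f = 0 → ‖z‖ ≤ R) ∧
      Polynomial.aeval a f = 0}.Finite := by
  classical
  set C : ℤ := ⌈max R 1 ^ n * n.choose (n / 2)⌉ with hC
  -- the set of admissible polynomials is finite
  have hPS : {f : Polynomial ℤ | f.natDegree ≤ n ∧
      ∀ i, f.coeff i ∈ Set.Icc (-C) C}.Finite := by
    let π : Polynomial ℤ → Fin (n + 1) → ℤ := fun f i => f.coeff i
    refine ((Set.Finite.pi fun _ : Fin (n + 1) => Set.finite_Icc (-C) C).subset
      ?_).of_finite_image (?_ : Set.InjOn π _)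
    · exact Set.image_subset_iff.2 fun f hf i _ => hf.2 i
    · refine fun x hx y hy hxy => (Polynomial.ext_iff_natDegree_le hx.1 hy.1).2 fun i hi => ?_
      exact congr_fun hxy ⟨i, Nat.lt_succ_of_le hi⟩
  have hPS' : ({f : Polynomial ℤ | f.natDegree ≤ n ∧
      ∀ i, f.coeff i ∈ Set.Icc (-C) C} ∩ {f | f.Monic}).Finite :=
    hPS.inter_of_left _
  refine (hPS'.biUnion fun f hf => finite_rootSet_of_monic A f hf.2).subset ?_
  rintro a ⟨f, hmon, hdeg, hroots, ha⟩
  refine Set.mem_biUnion ⟨⟨hdeg.le, fun i => ?_⟩, hmon⟩ ha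
  set g : Polynomial ℚ := f.map (Int.castRingHom ℚ) with hg
  have hmapmap : g.map (algebraMap ℚ ℂ) = f.map (Int.castRingHom ℂ) := by
    rw [hg, Polynomial.map_map]
    congr 1
  have hb : ∀ z ∈ (g.map (algebraMap ℚ ℂ)).roots, ‖z‖ ≤ R := by
    intro z hz
    rw [hmapmap] at hz
    have hz0 : Polynomial.aeval z f = 0 := by
      have := Polynomial.isRoot_of_mem_roots hz
      simpa [Polynomial.aeval_def, Polynomial.eval_map] using this
    simpa using hroots z hz0
  have hgmon : g.Monic := hmon.map _
  have hgdeg : g.natDegree ≤ n := by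
    rw [hg, hmon.natDegree_map]; exact hdeg.le
  have hbd := Polynomial.coeff_bdd_of_roots_le (algebraMap ℚ ℂ) hgmon
    (IsAlgClosed.splits (g.map (algebraMap ℚ ℂ))) hgdeg hb i
  rw [hmapmap] at hbd
  have hcast : ‖(f.map (Int.castRingHom ℂ)).coeff i‖ = |(f.coeff i : ℝ)| := by
    simp [Polynomial.coeff_map, Complex.norm_intCast]
  rw [hcast] at hbd
  have hle : (|f.coeff i| : ℝ) ≤ (C : ℝ) := by
    push_cast
    exact hbd.trans (Int.le_ceil _)
  rw [Set.mem_Icc, ← abs_le]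
  exact_mod_cast hle
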